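/- Let m, n be reals with 0 < m < n and n² ≠ 3m², and let Γ = {(2mi + mj, nj) : i, j ∈ ℤ}. Then the point group P(Γ), i.e. the set of linear isometries f of ℝ² with f(Γ) = Γ, is exactly {id, −id, α, −α}, where α(x,y) = (−x,y); in particular P(Γ) is isomorphic to the Klein four group (the dihedral group D₂ of order 4). -/

import Mathlib

open scoped RealInnerProductSpace

set_option maxHeartbeats 1000000 in
lemma intSolve (m n : ℝ) (hm : 0 < m) (hmn : m < n) (hsq : n ^ 2 ≠ 3 * m ^ 2)
    (a b a' b' : ℤ) (hp : Even (a - b)) (hp' : Even (a' - b'))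
    (h1 : m^2 * (a:ℝ)^2 + n^2 * (b:ℝ)^2 = m^2 + n^2)
    (h2 : m^2 * (a':ℝ)^2 + n^2 * (b':ℝ)^2 = m^2 + n^2)
    (h3 : m^2 * (a:ℝ) * (a':ℝ) + n^2 * (b:ℝ) * (b':ℝ) = n^2 - m^2) :
    a^2 = 1 ∧ b^2 = 1 ∧ a' = -a ∧ b' = b := by
  have hn : 0 < n := lt_trans hm hmn
  have hm2 : (0:ℝ) < m^2 := by positivity
  have hn2 : (0:ℝ) < n^2 := by positivity
  have hmn2 : m^2 < n^2 := by nlinarith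
  have cancel : ∀ x y : ℝ, m^2 * x = m^2 * y → x = y :=
    fun x y h => mul_left_cancel₀ (ne_of_gt hm2) h
  have hb : -1 ≤ b ∧ b ≤ 1 := by
    have : (b:ℝ)^2 < 4 := by nlinarith [sq_nonneg (a:ℝ)]
    have : b^2 < 4 := by exact_mod_cast this
    constructor <;> nlinarith
  have hb' : -1 ≤ b' ∧ b' ≤ 1 := by
    have : (b':ℝ)^2 < 4 := by nlinarith [sq_nonneg (a':ℝ)]
    have : b'^2 < 4 := by exact_mod_cast this
    constructor <;> nlinarith
  have hzero : ∀ c c' d' : ℤ, Even c → (-1 ≤ d') → (d' ≤ 1) →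
      m^2 * (c:ℝ)^2 = m^2 + n^2 →
      m^2 * (c':ℝ)^2 + n^2 * (d':ℝ)^2 = m^2 + n^2 →
      m^2 * (c:ℝ) * (c':ℝ) = n^2 - m^2 → False := by
    intro c c' d' hev hd1 hd2 e1 e2 e3
    have hkey : n^2 = m^2 * ((c:ℝ)^2 - 1) := by linear_combination -e1
    have e3r : (c:ℝ) * (c':ℝ) = (c:ℝ)^2 - 2 :=
      cancel _ _ (by linear_combination e3 + hkey)
    have e3z : c * c' = c^2 - 2 := by exact_mod_cast e3r
    have hc1 : (1:ℝ) < (c:ℝ)^2 := by nlinarith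
    have hc1z : 1 < c^2 := by exact_mod_cast hc1
    have hc4 : 4 ≤ c^2 := by
      rcases hev with ⟨k, hk⟩
      have hk0 : k ≠ 0 := by rintro rfl; rw [hk] at hc1z; norm_num at hc1z
      have h1k : 1 ≤ k^2 := by
        rcases lt_trichotomy k 0 with h|h|h
        · nlinarith
        · omega
        · nlinarith
      subst hk; nlinarith
    have hd : d' = 0 ∨ d'^2 = 1 := by
      rcases (by omega : d' = -1 ∨ d' = 0 ∨ d' = 1) with h|h|h <;> subst h <;> simp
    rcases hd with hd | hd
    · subst hd
      have hkey' : n^2 = m^2 * ((c':ℝ)^2 - 1) := by push_cast at e2; linear_combination -e2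
      have hcc : (c:ℝ)^2 = (c':ℝ)^2 := cancel _ _ (by linear_combination hkey' - hkey)
      have hccz : c^2 = c'^2 := by exact_mod_cast hcc
      have hq : (c^2-2)^2 = c^2 * c^2 := by
        linear_combination (-(c*c' + c^2 - 2)) * e3z + (-(c^2 : ℤ)) * hccz
      nlinarith
    · have hd2r : ((d':ℝ))^2 = 1 := by exact_mod_cast congrArg (fun t : ℤ => (t:ℝ)) hd
      have ecz : c'^2 = 1 := by
        have : (c':ℝ)^2 = 1 := cancel _ _ (by linear_combination e2 - n^2 * hd2r)
        exact_mod_cast this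
      have hkey2 : (c^2-2)^2 = c^2 := by
        linear_combination (-(c*c' + c^2 - 2)) * e3z + (c^2 : ℤ) * ecz
      have h5 : (c^2 - 1) * (c^2 - 4) = 0 := by linear_combination hkey2
      have hc44 : c^2 = 4 := by
        rcases mul_eq_zero.mp h5 with h | h
        · omega
        · omega
      apply hsq
      have : (c:ℝ)^2 = 4 := by exact_mod_cast hc44
      rw [hkey, this]; ring
  -- corner-case helper : b, b' ∈ {±1}
  have hcorner : ∀ c c' : ℤ,
      m^2 * (c:ℝ)^2 = m^2 → m^2 * (c':ℝ)^2 = m^2 →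
      c^2 = 1 ∧ c'^2 = 1 := by
    intro c c' e1 e2
    constructor
    · have : (c:ℝ)^2 = 1 := cancel _ _ (by linear_combination e1)
      exact_mod_cast this
    · have : (c':ℝ)^2 = 1 := cancel _ _ (by linear_combination e2)
      exact_mod_cast this
  obtain ⟨hb1, hb2⟩ := hb
  obtain ⟨hb1', hb2'⟩ := hb'
  interval_cases b <;> interval_cases b'
  -- (-1,-1)
  · obtain ⟨ha2, ha'2⟩ := hcorner a a' (by linear_combination h1) (by linear_combination h2)
    have haa : -1 ≤ a ∧ a ≤ 1 := by constructor <;> nlinarith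
    have haa' : -1 ≤ a' ∧ a' ≤ 1 := by constructor <;> nlinarith
    obtain ⟨x1,x2⟩ := haa; obtain ⟨y1,y2⟩ := haa'
    interval_cases a <;> interval_cases a' <;>
      first
        | (exfalso; push_cast at h3; linarith)
        | (refine ⟨?_, ?_, ?_, ?_⟩ <;> norm_num)
  -- (-1,0)
  · exact absurd (hzero a' a (-1) (by simpa using hp') (by norm_num) (by norm_num)
      (by linear_combination h2) (by linear_combination h1) (by linear_combination h3)) id
  -- (-1,1)
  · obtain ⟨ha2, ha'2⟩ := hcorner a a' (by linear_combination h1) (by linear_combination h2)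
    have haa : -1 ≤ a ∧ a ≤ 1 := by constructor <;> nlinarith
    have haa' : -1 ≤ a' ∧ a' ≤ 1 := by constructor <;> nlinarith
    obtain ⟨x1,x2⟩ := haa; obtain ⟨y1,y2⟩ := haa'
    interval_cases a <;> interval_cases a' <;>
      first
        | (exfalso; push_cast at h3; linarith)
        | (refine ⟨?_, ?_, ?_, ?_⟩ <;> norm_num)
  -- (0,-1)
  · exact absurd (hzero a a' (-1) (by simpa using hp) (by norm_num) (by norm_num)
      (by linear_combination h1) (by linear_combination h2) (by linear_combination h3)) id
  -- (0,0)
  · exact absurd (hzero a a' 0 (by simpa using hp) (by norm_num) (by norm_num)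
      (by linear_combination h1) (by linear_combination h2) (by linear_combination h3)) id
  -- (0,1)
  · exact absurd (hzero a a' 1 (by simpa using hp) (by norm_num) (by norm_num)
      (by linear_combination h1) (by linear_combination h2) (by linear_combination h3)) id
  -- (1,-1)
  · obtain ⟨ha2, ha'2⟩ := hcorner a a' (by linear_combination h1) (by linear_combination h2)
    have haa : -1 ≤ a ∧ a ≤ 1 := by constructor <;> nlinarith
    have haa' : -1 ≤ a' ∧ a' ≤ 1 := by constructor <;> nlinarith
    obtain ⟨x1,x2⟩ := haa; obtain ⟨y1,y2⟩ := haa'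
    interval_cases a <;> interval_cases a' <;>
      first
        | (exfalso; push_cast at h3; linarith)
        | (refine ⟨?_, ?_, ?_, ?_⟩ <;> norm_num)
  -- (1,0)
  · exact absurd (hzero a' a 1 (by simpa using hp') (by norm_num) (by norm_num)
      (by linear_combination h2) (by linear_combination h1) (by linear_combination h3)) id
  -- (1,1)
  · obtain ⟨ha2, ha'2⟩ := hcorner a a' (by linear_combination h1) (by linear_combination h2)
    have haa : -1 ≤ a ∧ a ≤ 1 := by constructor <;> nlinarith
    have haa' : -1 ≤ a' ∧ a' ≤ 1 := by constructor <;> nlinarith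
    obtain ⟨x1,x2⟩ := haa; obtain ⟨y1,y2⟩ := haa'
    interval_cases a <;> interval_cases a' <;>
      first
        | (exfalso; push_cast at h3; linarith)
        | (refine ⟨?_, ?_, ?_, ?_⟩ <;> norm_num)

/-- The Euclidean plane. -/
abbrev Plane := EuclideanSpace ℝ (Fin 2)

/-- The rhombic lattice `Γ = {(2mi + mj, nj) : i, j ∈ ℤ}` in the Euclidean plane. -/
def rhombicLattice (m n : ℝ) : Set Plane :=
  {p | ∃ i j : ℤ, p 0 = 2 * m * (i : ℝ) + m * (j : ℝ) ∧ p 1 = n * (j : ℝ)}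

/-- The point group of `Γ`: the set of linear isometries (as self-isometries of the
plane) mapping `Γ` onto itself. -/
def pointGroupSet (Γ : Set Plane) : Set (Plane ≃ᵢ Plane) :=
  {f | (∀ (c : ℝ) (x y : Plane), f (c • x + y) = c • f x + f y) ∧ f '' Γ = Γ}

namespace RhombicAux

lemma planeExt (p q : Plane) (h0 : p 0 = q 0) (h1 : p 1 = q 1) : p = q := by
  apply WithLp.ofLp_injective 2; funext i; fin_cases i <;> assumption

lemma icoord (x y : Plane) : ⟪x, y⟫ = x 0 * y 0 + x 1 * y 1 := by
  simp [PiLp.inner_apply, Fin.sum_univ_two, RCLike.inner_apply, mul_comm]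

lemma dist_coords (p q : Plane) :
    dist p q = Real.sqrt ((p 0 - q 0)^2 + (p 1 - q 1)^2) := by
  rw [EuclideanSpace.dist_eq, Fin.sum_univ_two, Real.dist_eq, Real.dist_eq, sq_abs, sq_abs]

/-- the reflection (x,y) ↦ (-x,y) -/
noncomputable def alphaIso : Plane ≃ᵢ Plane where
  toFun p := WithLp.toLp 2 ![-(p 0), p 1]
  invFun p := WithLp.toLp 2 ![-(p 0), p 1]
  left_inv p := planeExt _ _ (by show -(-(p 0)) = p 0; ring) rfl
  right_inv p := planeExt _ _ (by show -(-(p 0)) = p 0; ring) rfl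
  isometry_toFun := Isometry.of_dist_eq fun p q => by
    rw [dist_coords, dist_coords]
    show Real.sqrt ((-(p 0) - -(q 0))^2 + (p 1 - q 1)^2) = _
    congr 1; ring

/-- the half-turn (x,y) ↦ (-x,-y) -/
noncomputable def negIso : Plane ≃ᵢ Plane where
  toFun p := WithLp.toLp 2 ![-(p 0), -(p 1)]
  invFun p := WithLp.toLp 2 ![-(p 0), -(p 1)]
  left_inv p := planeExt _ _ (by show -(-(p 0)) = p 0; ring) (by show -(-(p 1)) = p 1; ring)
  right_inv p := planeExt _ _ (by show -(-(p 0)) = p 0; ring) (by show -(-(p 1)) = p 1; ring)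
  isometry_toFun := Isometry.of_dist_eq fun p q => by
    rw [dist_coords, dist_coords]
    show Real.sqrt ((-(p 0) - -(q 0))^2 + (-(p 1) - -(q 1))^2) = _
    congr 1; ring

/-- the reflection (x,y) ↦ (x,-y) -/
noncomputable def betaIso : Plane ≃ᵢ Plane where
  toFun p := WithLp.toLp 2 ![p 0, -(p 1)]
  invFun p := WithLp.toLp 2 ![p 0, -(p 1)]
  left_inv p := planeExt _ _ rfl (by show -(-(p 1)) = p 1; ring)
  right_inv p := planeExt _ _ rfl (by show -(-(p 1)) = p 1; ring)
  isometry_toFun := Isometry.of_dist_eq fun p q => by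
    rw [dist_coords, dist_coords]
    show Real.sqrt ((p 0 - q 0)^2 + (-(p 1) - -(q 1))^2) = _
    congr 1; ring

@[simp] lemma alphaIso_apply_0 (p : Plane) : alphaIso p 0 = -(p 0) := rfl
@[simp] lemma alphaIso_apply_1 (p : Plane) : alphaIso p 1 = p 1 := rfl
@[simp] lemma negIso_apply_0 (p : Plane) : negIso p 0 = -(p 0) := rfl
@[simp] lemma negIso_apply_1 (p : Plane) : negIso p 1 = -(p 1) := rfl
@[simp] lemma betaIso_apply_0 (p : Plane) : betaIso p 0 = p 0 := rfl
@[simp] lemma betaIso_apply_1 (p : Plane) : betaIso p 1 = -(p 1) := rfl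

def uu : Plane := WithLp.toLp 2 ![1, 1]

lemma one_ne_neg : (1 : Plane ≃ᵢ Plane) ≠ negIso := by
  intro h
  have h' : (1:ℝ) = -1 := congrArg (fun g : Plane ≃ᵢ Plane => g uu 0) h
  norm_num at h'

lemma one_ne_alpha : (1 : Plane ≃ᵢ Plane) ≠ alphaIso := by
  intro h
  have h' : (1:ℝ) = -1 := congrArg (fun g : Plane ≃ᵢ Plane => g uu 0) h
  norm_num at h'

lemma one_ne_beta : (1 : Plane ≃ᵢ Plane) ≠ betaIso := by
  intro h
  have h' : (1:ℝ) = -1 := congrArg (fun g : Plane ≃ᵢ Plane => g uu 1) h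
  norm_num at h'

lemma neg_ne_alpha : negIso ≠ alphaIso := by
  intro h
  have h' : (-1:ℝ) = 1 := congrArg (fun g : Plane ≃ᵢ Plane => g uu 1) h
  norm_num at h'

lemma neg_ne_beta : negIso ≠ betaIso := by
  intro h
  have h' : (-1:ℝ) = 1 := congrArg (fun g : Plane ≃ᵢ Plane => g uu 0) h
  norm_num at h'

lemma alpha_ne_beta : alphaIso ≠ betaIso := by
  intro h
  have h' : (-1:ℝ) = 1 := congrArg (fun g : Plane ≃ᵢ Plane => g uu 0) h
  norm_num at h'

end RhombicAux

set_option maxHeartbeats 1600000 in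
/-- For `0 < m < n` with `n² ≠ 3m²`, the point group of the rhombic
lattice `Γ = {(2mi + mj, nj) : i, j ∈ ℤ}` consists exactly of `id`, `−id`, the
reflection `α(x,y) = (−x,y)`, and `−α : (x,y) ↦ (x,−y)`; in particular, any subgroup
of the isometry group of the plane with this carrier is isomorphic to the Klein four
group (the dihedral group `D₂` of order 4). -/
theorem stmt_1 (m n : ℝ) (hm : 0 < m) (hmn : m < n) (hsq : n ^ 2 ≠ 3 * m ^ 2) :
    pointGroupSet (rhombicLattice m n) =
      {f : Plane ≃ᵢ Plane |
        (∀ p, f p = p) ∨ (∀ p, f p = -p) ∨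
        (∀ p, (f p) 0 = -(p 0) ∧ (f p) 1 = p 1) ∨
        (∀ p, (f p) 0 = p 0 ∧ (f p) 1 = -(p 1))} ∧
    ∀ P : Subgroup (Plane ≃ᵢ Plane),
      (P : Set (Plane ≃ᵢ Plane)) = pointGroupSet (rhombicLattice m n) →
        Nonempty (P ≃* DihedralGroup 2) := by
  classical
  have hn : 0 < n := lt_trans hm hmn
  have hm0 : m ≠ 0 := ne_of_gt hm
  have hn0 : n ≠ 0 := ne_of_gt hn
  open RhombicAux in
  -- lattice membership is preserved by the four candidate maps
  have himghelp : ∀ f : Plane ≃ᵢ Plane,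
      (∀ p ∈ rhombicLattice m n, f p ∈ rhombicLattice m n) → (∀ p, f (f p) = p) →
      f '' rhombicLattice m n = rhombicLattice m n := by
    intro f hcl hinv
    apply Set.Subset.antisymm
    · rintro q ⟨p, hp, rfl⟩; exact hcl p hp
    · intro p hp; exact ⟨f p, hcl p hp, hinv p⟩
  have key : pointGroupSet (rhombicLattice m n) =
      {f : Plane ≃ᵢ Plane |
        (∀ p, f p = p) ∨ (∀ p, f p = -p) ∨
        (∀ p, (f p) 0 = -(p 0) ∧ (f p) 1 = p 1) ∨
        (∀ p, (f p) 0 = p 0 ∧ (f p) 1 = -(p 1))} := by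
    ext f
    constructor
    · rintro ⟨hlin, himg⟩
      -- basic linearity facts
      have hf0 : f 0 = 0 := by
        have h := hlin 1 0 0
        simp only [one_smul, add_zero] at h
        have h2 : f 0 + 0 = f 0 + f 0 := by rw [add_zero]; exact h
        exact (add_left_cancel h2).symm
      have hsmul : ∀ (c : ℝ) (x : Plane), f (c • x) = c • f x := by
        intro c x
        have h := hlin c x 0
        simpa [hf0] using h
      have hadd : ∀ x y : Plane, f (x + y) = f x + f y := by
        intro x y
        have h := hlin 1 x y
        simpa using h
      have hnorm : ∀ x : Plane, ‖f x‖ = ‖x‖ := by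
        intro x
        have h := f.dist_eq x 0
        rw [hf0] at h
        simpa [dist_zero_right] using h
      have hinner : ∀ x y : Plane, ⟪f x, f y⟫ = ⟪x, y⟫ := by
        intro x y
        have h1 : ‖f x + f y‖ = ‖x + y‖ := by rw [← hadd]; exact hnorm _
        have e1 := norm_add_sq_real (f x) (f y)
        have e2 := norm_add_sq_real x y
        rw [h1, hnorm x, hnorm y] at e1
        linarith
      -- the two short lattice vectors
      set v2 : Plane := WithLp.toLp 2 ![m, n] with hv2def
      set w2 : Plane := WithLp.toLp 2 ![-m, n] with hw2def
      have hv2 : v2 ∈ rhombicLattice m n := ⟨0, 1, by push_cast; show m = _; ring,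
        by push_cast; show n = _; ring⟩
      have hw2 : w2 ∈ rhombicLattice m n := ⟨-1, 1, by push_cast; show -m = _; ring,
        by push_cast; show n = _; ring⟩
      obtain ⟨i, j, hfv0, hfv1⟩ : f v2 ∈ rhombicLattice m n :=
        himg ▸ Set.mem_image_of_mem f hv2
      obtain ⟨i', j', hfw0, hfw1⟩ : f w2 ∈ rhombicLattice m n :=
        himg ▸ Set.mem_image_of_mem f hw2
      obtain ⟨a, b, a', b', hab, hab2, hab3, hab4⟩ :
          ∃ a b a' b' : ℤ, a = 2*i + j ∧ b = j ∧ a' = 2*i' + j' ∧ b' = j' :=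
        ⟨2*i + j, j, 2*i' + j', j', rfl, rfl, rfl, rfl⟩
      have hfv0' : (f v2) 0 = m * (a:ℝ) := by rw [hfv0, hab]; push_cast; ring
      have hfv1' : (f v2) 1 = n * (b:ℝ) := by rw [hfv1, hab2]
      have hfw0' : (f w2) 0 = m * (a':ℝ) := by rw [hfw0, hab3]; push_cast; ring
      have hfw1' : (f w2) 1 = n * (b':ℝ) := by rw [hfw1, hab4]
      have hv20 : v2 0 = m := rfl
      have hv21 : v2 1 = n := rfl
      have hw20 : w2 0 = -m := rfl
      have hw21 : w2 1 = n := rfl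
      have E1 : m^2 * (a:ℝ)^2 + n^2 * (b:ℝ)^2 = m^2 + n^2 := by
        have h := hinner v2 v2
        rw [icoord, icoord, hfv0', hfv1', hv20, hv21] at h
        linear_combination h
      have E2 : m^2 * (a':ℝ)^2 + n^2 * (b':ℝ)^2 = m^2 + n^2 := by
        have h := hinner w2 w2
        rw [icoord, icoord, hfw0', hfw1', hw20, hw21] at h
        linear_combination h
      have E3 : m^2 * (a:ℝ) * (a':ℝ) + n^2 * (b:ℝ) * (b':ℝ) = n^2 - m^2 := by
        have h := hinner v2 w2
        rw [icoord, icoord, hfv0', hfv1', hfw0', hfw1', hv20, hv21, hw20, hw21] at h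
        linear_combination h
      obtain ⟨ha2, hb2, ha'eq, hb'eq⟩ :=
        intSolve m n hm hmn hsq a b a' b' ⟨i, by rw [hab, hab2]; ring⟩
          ⟨i', by rw [hab3, hab4]; ring⟩ E1 E2 E3
      -- decompose an arbitrary point in the basis v2, w2
      have hdecomp : ∀ p : Plane,
          p = ((p 0 / m + p 1 / n) / 2) • v2 + ((p 1 / n - p 0 / m) / 2) • w2 := by
        intro p
        apply planeExt
        · show p 0 = (p 0 / m + p 1 / n) / 2 * m + (p 1 / n - p 0 / m) / 2 * (-m)
          field_simp; ring
        · show p 1 = (p 0 / m + p 1 / n) / 2 * n + (p 1 / n - p 0 / m) / 2 * n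
          field_simp; ring
      have hcoords : ∀ p : Plane, (f p) 0 = (a:ℝ) * p 0 ∧ (f p) 1 = (b:ℝ) * p 1 := by
        intro p
        have hfp : f p = ((p 0 / m + p 1 / n) / 2) • f v2 + ((p 1 / n - p 0 / m) / 2) • f w2 := by
          conv_lhs => rw [hdecomp p]
          rw [hlin _ _ _, hsmul]
        have ha'r : (a':ℝ) = -(a:ℝ) := by exact_mod_cast congrArg (fun t : ℤ => (t:ℝ)) ha'eq
        have hb'r : (b':ℝ) = (b:ℝ) := by exact_mod_cast congrArg (fun t : ℤ => (t:ℝ)) hb'eq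
        constructor
        · rw [hfp]
          show (p 0 / m + p 1 / n) / 2 * (f v2) 0 + (p 1 / n - p 0 / m) / 2 * (f w2) 0
            = (a:ℝ) * p 0
          rw [hfv0', hfw0', ha'r]
          field_simp; ring
        · rw [hfp]
          show (p 0 / m + p 1 / n) / 2 * (f v2) 1 + (p 1 / n - p 0 / m) / 2 * (f w2) 1
            = (b:ℝ) * p 1
          rw [hfv1', hfw1', hb'r]
          field_simp; ring
      have ha1 : a = 1 ∨ a = -1 :=
        Int.isUnit_iff.mp (IsUnit.of_mul_eq_one (a := a) a (by linear_combination ha2))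
      have hb1 : b = 1 ∨ b = -1 :=
        Int.isUnit_iff.mp (IsUnit.of_mul_eq_one (a := b) b (by linear_combination hb2))
      rcases ha1 with ha | ha <;> rcases hb1 with hb | hb
      · -- identity
        left
        intro p
        obtain ⟨h0, h1⟩ := hcoords p
        rw [ha] at h0; rw [hb] at h1
        exact planeExt _ _ (by rw [h0]; norm_num) (by rw [h1]; norm_num)
      · -- (x, -y)
        right; right; right
        intro p
        obtain ⟨h0, h1⟩ := hcoords p
        rw [ha] at h0; rw [hb] at h1
        exact ⟨by rw [h0]; norm_num, by rw [h1]; push_cast; ring⟩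
      · -- (-x, y)
        right; right; left
        intro p
        obtain ⟨h0, h1⟩ := hcoords p
        rw [ha] at h0; rw [hb] at h1
        exact ⟨by rw [h0]; push_cast; ring, by rw [h1]; norm_num⟩
      · -- -id
        right; left
        intro p
        obtain ⟨h0, h1⟩ := hcoords p
        rw [ha] at h0; rw [hb] at h1
        refine planeExt _ _ ?_ ?_
        · rw [h0]; show _ = -(p 0); push_cast; ring
        · rw [h1]; show _ = -(p 1); push_cast; ring
    · rintro (h | h | h | h)
      · constructor
        · intro c x y; simp only [h]
        · exact himghelp f (fun p hp => by rwa [h]) (fun p => by rw [h, h])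
      · constructor
        · intro c x y
          rw [h, h, h]
          module
        · refine himghelp f ?_ ?_
          · rintro p ⟨i, j, h0, h1⟩
            refine ⟨-i, -j, ?_, ?_⟩
            · rw [h p]; show -(p 0) = _; rw [h0]; push_cast; ring
            · rw [h p]; show -(p 1) = _; rw [h1]; push_cast; ring
          · intro p
            rw [h, h, neg_neg]
      · constructor
        · intro c x y
          refine planeExt _ _ ?_ ?_
          · rw [(h _).1]
            show -(c * x 0 + y 0) = c * (f x) 0 + (f y) 0
            rw [(h x).1, (h y).1]; ring
          · rw [(h _).2]
            show c * x 1 + y 1 = c * (f x) 1 + (f y) 1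
            rw [(h x).2, (h y).2]
        · refine himghelp f ?_ ?_
          · rintro p ⟨i, j, h0, h1⟩
            refine ⟨-i - j, j, ?_, ?_⟩
            · rw [(h p).1, h0]; push_cast; ring
            · rw [(h p).2, h1]
          · intro p
            refine planeExt _ _ ?_ ?_
            · rw [(h _).1, (h _).1]; ring
            · rw [(h _).2, (h _).2]
      · constructor
        · intro c x y
          refine planeExt _ _ ?_ ?_
          · rw [(h _).1]
            show c * x 0 + y 0 = c * (f x) 0 + (f y) 0
            rw [(h x).1, (h y).1]
          · rw [(h _).2]
            show -(c * x 1 + y 1) = c * (f x) 1 + (f y) 1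
            rw [(h x).2, (h y).2]; ring
        · refine himghelp f ?_ ?_
          · rintro p ⟨i, j, h0, h1⟩
            refine ⟨i + j, -j, ?_, ?_⟩
            · rw [(h p).1, h0]; push_cast; ring
            · rw [(h p).2, h1]; push_cast; ring
          · intro p
            refine planeExt _ _ ?_ ?_
            · rw [(h _).1, (h _).1]
            · rw [(h _).2, (h _).2]; ring
  refine ⟨key, ?_⟩
  intro P hP
  open RhombicAux in
  have hSet : (P : Set (Plane ≃ᵢ Plane)) =
      {1, negIso, alphaIso, betaIso} := by
    rw [hP, key]
    ext f
    constructor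
    · rintro (h | h | h | h)
      · left; exact IsometryEquiv.ext h
      · right; left
        refine IsometryEquiv.ext fun p => ?_
        rw [h p]
        exact planeExt _ _ rfl rfl
      · right; right; left
        refine IsometryEquiv.ext fun p => planeExt _ _ ?_ ?_
        · rw [(h p).1]; rfl
        · rw [(h p).2]; rfl
      · right; right; right
        refine IsometryEquiv.ext fun p => planeExt _ _ ?_ ?_
        · rw [(h p).1]; rfl
        · rw [(h p).2]; rfl
    · rintro (rfl | rfl | rfl | rfl)
      · left; intro p; rfl
      · right; left; intro p
        exact planeExt _ _ rfl rfl
      · right; right; left; intro p; exact ⟨rfl, rfl⟩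
      · right; right; right; intro p; exact ⟨rfl, rfl⟩
  -- the four elements are in P
  have hmem : ∀ g ∈ ({1, negIso, alphaIso, betaIso} : Set (Plane ≃ᵢ Plane)), g ∈ P := by
    intro g hg
    rw [← SetLike.mem_coe, hSet]; exact hg
  -- squares are trivial
  have hsq2 : ∀ g : Plane ≃ᵢ Plane, g ∈ P → g * g = 1 := by
    intro g hg
    rw [← SetLike.mem_coe, hSet] at hg
    rcases hg with rfl | rfl | rfl | rfl
    · rw [mul_one]
    · refine IsometryEquiv.ext fun p => planeExt _ _ ?_ ?_
      · show negIso (negIso p) 0 = p 0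
        rw [negIso_apply_0, negIso_apply_0]; ring
      · show negIso (negIso p) 1 = p 1
        rw [negIso_apply_1, negIso_apply_1]; ring
    · refine IsometryEquiv.ext fun p => planeExt _ _ ?_ ?_
      · show alphaIso (alphaIso p) 0 = p 0
        rw [alphaIso_apply_0, alphaIso_apply_0]; ring
      · show alphaIso (alphaIso p) 1 = p 1
        rw [alphaIso_apply_1, alphaIso_apply_1]
    · refine IsometryEquiv.ext fun p => planeExt _ _ ?_ ?_
      · show betaIso (betaIso p) 0 = p 0
        rw [betaIso_apply_0, betaIso_apply_0]
      · show betaIso (betaIso p) 1 = p 1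
        rw [betaIso_apply_1, betaIso_apply_1]; ring
  have hcard : Nat.card P = 4 := by
    have h1 : Nat.card P = ({1, negIso, alphaIso, betaIso} : Set (Plane ≃ᵢ Plane)).ncard := by
      rw [← Nat.card_coe_set_eq]
      exact Nat.card_congr (Equiv.setCongr hSet)
    rw [h1]
    rw [Set.ncard_insert_of_notMem (by simp [one_ne_neg, one_ne_alpha, one_ne_beta]),
      Set.ncard_insert_of_notMem (by simp [neg_ne_alpha, neg_ne_beta]),
      Set.ncard_pair alpha_ne_beta]
  have hnt : Nontrivial P := by
    refine ⟨⟨1, P.one_mem⟩, ⟨negIso, hmem negIso (by simp)⟩, ?_⟩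
    intro hcontra
    exact one_ne_neg (congrArg Subtype.val hcontra)
  have hexp : Monoid.exponent P = 2 := by
    rw [Monoid.exponent_eq_prime_iff Nat.prime_two]
    intro g hg
    have hg2 : g ^ 2 = 1 := by
      apply Subtype.ext
      push_cast
      rw [sq]
      exact hsq2 (g : Plane ≃ᵢ Plane) g.2
    exact orderOf_eq_prime hg2 hg
  have : IsKleinFour P := ⟨hcard, hexp⟩
  exact IsKleinFour.nonempty_mulEquiv
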